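/- Suppose V0(X) ≥ λ0 almost surely for some constant λ0 > 0 (overlap). If a bounded measurable function θ of X satisfies the conditional moment equation E[(Y − q0(X) − θ(X)·(h0(Z,X) − p0(X)))·(h0(Z,X) − p0(X)) | X] = 0 almost surely, then θ(X) = θ0(X) almost surely; i.e., the heterogeneous effect function θ0 is identified by these moments. -/

import Mathlib

open MeasureTheory

private abbrev mXa {Ω 𝓧 : Type*} [MeasurableSpace 𝓧] (X : Ω → 𝓧) : MeasurableSpace Ω :=
  MeasurableSpace.comap X inferInstance

private abbrev mZXa {Ω 𝓧 : Type*} [MeasurableSpace 𝓧] (Z : Ω → ℝ) (X : Ω → 𝓧) :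
    MeasurableSpace Ω :=
  MeasurableSpace.comap (fun ω => (Z ω, X ω)) inferInstance

private lemma bddInt {Ω : Type*} [MeasurableSpace Ω] (μ : Measure Ω) [IsFiniteMeasure μ]
    {f : Ω → ℝ} (hf : Measurable f) {C : ℝ} (h : ∀ ω, |f ω| ≤ C) : Integrable f μ :=
  (integrable_const C).mono' hf.aestronglyMeasurable
    (Filter.Eventually.of_forall fun ω => by simpa [Real.norm_eq_abs] using h ω)

theorem stmt_3
    {Ω 𝓧 : Type*} [MeasurableSpace Ω] [MeasurableSpace 𝓧] [StandardBorelSpace 𝓧]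
    (μ : Measure Ω) [IsProbabilityMeasure μ]
    (Y T Z : Ω → ℝ) (X : Ω → 𝓧)
    (hY : Measurable Y) (hT : Measurable T) (hZ : Measurable Z) (hX : Measurable X)
    (hYbdd : ∃ C, ∀ ω, |Y ω| ≤ C) (hTbdd : ∃ C, ∀ ω, |T ω| ≤ C)
    (hZbdd : ∃ C, ∀ ω, |Z ω| ≤ C)
    (θ0 f0 : 𝓧 → ℝ) (hθ0m : Measurable θ0) (hf0m : Measurable f0)
    (hθ0bdd : ∃ C, ∀ x, |θ0 x| ≤ C) (hf0bdd : ∃ C, ∀ x, |f0 x| ≤ C)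
    (hIV : μ[fun ω => Y ω - θ0 (X ω) * T ω - f0 (X ω) |
        MeasurableSpace.comap (fun ω => (Z ω, X ω)) inferInstance] =ᵐ[μ] 0)
    (q0 p0 r0 : 𝓧 → ℝ) (hq0m : Measurable q0) (hp0m : Measurable p0) (hr0m : Measurable r0)
    (hq0bdd : ∃ C, ∀ x, |q0 x| ≤ C) (hp0bdd : ∃ C, ∀ x, |p0 x| ≤ C)
    (hr0bdd : ∃ C, ∀ x, |r0 x| ≤ C)
    (hq0 : (fun ω => q0 (X ω)) =ᵐ[μ] μ[Y | MeasurableSpace.comap X inferInstance])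
    (hp0 : (fun ω => p0 (X ω)) =ᵐ[μ] μ[T | MeasurableSpace.comap X inferInstance])
    (hr0 : (fun ω => r0 (X ω)) =ᵐ[μ] μ[Z | MeasurableSpace.comap X inferInstance])
    (h0 : ℝ × 𝓧 → ℝ) (hh0m : Measurable h0) (hh0bdd : ∃ C, ∀ zx, |h0 zx| ≤ C)
    (hh0 : (fun ω => h0 (Z ω, X ω)) =ᵐ[μ]
        μ[T | MeasurableSpace.comap (fun ω => (Z ω, X ω)) inferInstance])
    (β0 : 𝓧 → ℝ) (hβ0m : Measurable β0) (hβ0bdd : ∃ C, ∀ x, |β0 x| ≤ C)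
    (hβ0 : (fun ω => β0 (X ω)) =ᵐ[μ]
        μ[fun ω => (T ω - p0 (X ω)) * (Z ω - r0 (X ω)) | MeasurableSpace.comap X inferInstance])
    (V0 : 𝓧 → ℝ) (hV0m : Measurable V0) (hV0bdd : ∃ C, ∀ x, |V0 x| ≤ C)
    (hV0 : (fun ω => V0 (X ω)) =ᵐ[μ]
        μ[fun ω => (h0 (Z ω, X ω) - p0 (X ω)) ^ 2 | MeasurableSpace.comap X inferInstance])
    (lam0 : ℝ) (hlam0 : 0 < lam0) (hoverlap : ∀ᵐ ω ∂μ, lam0 ≤ V0 (X ω))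
    (θ : 𝓧 → ℝ) (hθm : Measurable θ) (hθbdd : ∃ C, ∀ x, |θ x| ≤ C)
    (hmom : μ[fun ω => (Y ω - q0 (X ω) - θ (X ω) * (h0 (Z ω, X ω) - p0 (X ω)))
        * (h0 (Z ω, X ω) - p0 (X ω)) | MeasurableSpace.comap X inferInstance] =ᵐ[μ] 0) :
    (fun ω => θ (X ω)) =ᵐ[μ] (fun ω => θ0 (X ω)) := by
  obtain ⟨CY, hCY⟩ := hYbdd
  obtain ⟨CT, hCT⟩ := hTbdd
  have hW : Measurable (fun ω => (Z ω, X ω)) := hZ.prodMk hX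
  have hmZX_le : mZXa Z X ≤ ‹MeasurableSpace Ω› := measurable_iff_comap_le.mp hW
  have hmX_le_mZX : mXa X ≤ mZXa Z X := by
    have h1 : (Prod.snd ∘ fun ω => (Z ω, X ω)) = X := rfl
    have h2 : mXa X = MeasurableSpace.comap (fun ω => (Z ω, X ω))
        (MeasurableSpace.comap Prod.snd inferInstance) := by
      rw [MeasurableSpace.comap_comp, h1]
    rw [h2]
    exact MeasurableSpace.comap_mono (measurable_iff_comap_le.mp measurable_snd)
  have hmX_le : mXa X ≤ ‹MeasurableSpace Ω› := hmX_le_mZX.trans hmZX_le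
  have hXmX : Measurable[mXa X] X := measurable_iff_comap_le.mpr le_rfl
  have hWmZX : Measurable[mZXa Z X] (fun ω => (Z ω, X ω)) := measurable_iff_comap_le.mpr le_rfl
  -- strong measurability facts
  have smθ0X : StronglyMeasurable[mXa X] (fun ω => θ0 (X ω)) :=
    (hθ0m.comp hXmX).stronglyMeasurable
  have smθX : StronglyMeasurable[mXa X] (fun ω => θ (X ω)) := (hθm.comp hXmX).stronglyMeasurable
  have smθ0X' : StronglyMeasurable[mZXa Z X] (fun ω => θ0 (X ω)) := smθ0X.mono hmX_le_mZX
  have smf0X : StronglyMeasurable[mZXa Z X] (fun ω => f0 (X ω)) :=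
    ((hf0m.comp hXmX).stronglyMeasurable).mono hmX_le_mZX
  have smq0X : StronglyMeasurable[mZXa Z X] (fun ω => q0 (X ω)) :=
    ((hq0m.comp hXmX).stronglyMeasurable).mono hmX_le_mZX
  have hDm : Measurable (fun ω => h0 (Z ω, X ω) - p0 (X ω)) :=
    (hh0m.comp hW).sub (hp0m.comp hX)
  have smD : StronglyMeasurable[mZXa Z X] (fun ω => h0 (Z ω, X ω) - p0 (X ω)) :=
    ((hh0m.comp hWmZX).sub ((hp0m.comp hXmX).mono hmX_le_mZX le_rfl)).stronglyMeasurable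
  -- bounds and integrability
  obtain ⟨Ch0, hCh0⟩ := hh0bdd
  obtain ⟨Cp0, hCp0⟩ := hp0bdd
  obtain ⟨Cq0, hCq0⟩ := hq0bdd
  set CD : ℝ := max (Ch0 + Cp0) 0 with hCD_def
  have hCD : ∀ ω, |h0 (Z ω, X ω) - p0 (X ω)| ≤ CD := fun ω =>
    ((abs_sub _ _).trans (add_le_add (hCh0 _) (hCp0 _))).trans (le_max_left _ _)
  have hCDnn : (0:ℝ) ≤ CD := le_max_right _ _
  have iY : Integrable Y μ := bddInt μ hY hCY
  have iT : Integrable T μ := bddInt μ hT hCT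
  have ih0W : Integrable (fun ω => h0 (Z ω, X ω)) μ := bddInt μ (hh0m.comp hW) fun ω => hCh0 _
  have iq0X : Integrable (fun ω => q0 (X ω)) μ := bddInt μ (hq0m.comp hX) fun ω => hCq0 _
  have if0X : Integrable (fun ω => f0 (X ω)) μ := by
    obtain ⟨Cf0, hCf0⟩ := hf0bdd
    exact bddInt μ (hf0m.comp hX) fun ω => hCf0 _
  have iD : Integrable (fun ω => h0 (Z ω, X ω) - p0 (X ω)) μ := bddInt μ hDm hCD
  have iD2 : Integrable (fun ω => (h0 (Z ω, X ω) - p0 (X ω)) ^ 2) μ := by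
    refine bddInt μ (hDm.pow_const 2) (C := CD ^ 2) fun ω => ?_
    rw [abs_pow]
    exact pow_le_pow_left₀ (abs_nonneg _) (hCD ω) 2
  obtain ⟨Cθ0, hCθ0⟩ := hθ0bdd
  obtain ⟨Cθ, hCθ⟩ := hθbdd
  have iθ0T : Integrable (fun ω => θ0 (X ω) * T ω) μ :=
    iT.bdd_mul (hθ0m.comp hX).aestronglyMeasurable
      (c := Cθ0) (Filter.Eventually.of_forall fun ω => by simpa [Real.norm_eq_abs] using hCθ0 (X ω))
  have iθ0h0W : Integrable (fun ω => θ0 (X ω) * h0 (Z ω, X ω)) μ :=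
    ih0W.bdd_mul (hθ0m.comp hX).aestronglyMeasurable
      (c := Cθ0) (Filter.Eventually.of_forall fun ω => by simpa [Real.norm_eq_abs] using hCθ0 (X ω))
  have iYq0D : Integrable (fun ω => (Y ω - q0 (X ω)) * (h0 (Z ω, X ω) - p0 (X ω))) μ :=
    iD.bdd_mul (hY.sub (hq0m.comp hX)).aestronglyMeasurable
      (c := CY + Cq0) (Filter.Eventually.of_forall fun ω => by
        simpa [Real.norm_eq_abs] using (abs_sub _ _).trans (add_le_add (hCY ω) (hCq0 (X ω))))
  have iθD2 : Integrable (fun ω => θ (X ω) * (h0 (Z ω, X ω) - p0 (X ω)) ^ 2) μ :=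
    iD2.bdd_mul (hθm.comp hX).aestronglyMeasurable
      (c := Cθ) (Filter.Eventually.of_forall fun ω => by simpa [Real.norm_eq_abs] using hCθ (X ω))
  have iθ0D2 : Integrable (fun ω => θ0 (X ω) * (h0 (Z ω, X ω) - p0 (X ω)) ^ 2) μ :=
    iD2.bdd_mul (hθ0m.comp hX).aestronglyMeasurable
      (c := Cθ0) (Filter.Eventually.of_forall fun ω => by simpa [Real.norm_eq_abs] using hCθ0 (X ω))
  -- Step B : conditional expectation of Y given (Z,X)
  have hEY : μ[Y|mZXa Z X] =ᵐ[μ] fun ω => θ0 (X ω) * h0 (Z ω, X ω) + f0 (X ω) := by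
    have hdec : Y = (fun ω => Y ω - θ0 (X ω) * T ω - f0 (X ω)) +
        ((fun ω => θ0 (X ω) * T ω) + fun ω => f0 (X ω)) := by
      funext ω; simp only [Pi.add_apply]; ring
    have h1 : μ[Y|mZXa Z X] =ᵐ[μ]
        μ[fun ω => Y ω - θ0 (X ω) * T ω - f0 (X ω)|mZXa Z X] +
          μ[(fun ω => θ0 (X ω) * T ω) + fun ω => f0 (X ω)|mZXa Z X] := by
      nth_rewrite 1 [hdec]
      exact condExp_add ((iY.sub iθ0T).sub if0X) (iθ0T.add if0X) _
    have h2 : μ[(fun ω => θ0 (X ω) * T ω) + fun ω => f0 (X ω)|mZXa Z X] =ᵐ[μ]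
        μ[fun ω => θ0 (X ω) * T ω|mZXa Z X] + μ[fun ω => f0 (X ω)|mZXa Z X] :=
      condExp_add iθ0T if0X _
    have h3 : μ[fun ω => θ0 (X ω) * T ω|mZXa Z X] =ᵐ[μ] (fun ω => θ0 (X ω)) * μ[T|mZXa Z X] :=
      condExp_mul_of_stronglyMeasurable_left smθ0X' iθ0T iT
    have h4 : μ[fun ω => f0 (X ω)|mZXa Z X] = fun ω => f0 (X ω) :=
      condExp_of_stronglyMeasurable hmZX_le smf0X if0X
    filter_upwards [h1, h2, h3, hIV, hh0] with ω e1 e2 e3 e4 e5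
    simp only [Pi.add_apply, Pi.mul_apply, Pi.zero_apply] at *
    rw [e1, e2, e3, e4, h4, ← e5]
    ring
  -- conditional expectation of h0∘(Z,X) given X is p0∘X
  have hEh0 : μ[fun ω => h0 (Z ω, X ω)|mXa X] =ᵐ[μ] fun ω => p0 (X ω) := by
    calc μ[fun ω => h0 (Z ω, X ω)|mXa X] =ᵐ[μ] μ[μ[T|mZXa Z X]|mXa X] := condExp_congr_ae hh0
      _ =ᵐ[μ] μ[T|mXa X] := condExp_condExp_of_le hmX_le_mZX hmZX_le
      _ =ᵐ[μ] fun ω => p0 (X ω) := hp0.symm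
  -- Step C : q0 = θ0 * p0 + f0
  have hq0id : (fun ω => q0 (X ω)) =ᵐ[μ] fun ω => θ0 (X ω) * p0 (X ω) + f0 (X ω) := by
    have h1 : μ[Y|mXa X] =ᵐ[μ] μ[μ[Y|mZXa Z X]|mXa X] := (condExp_condExp_of_le hmX_le_mZX hmZX_le).symm
    have h2 : μ[μ[Y|mZXa Z X]|mXa X] =ᵐ[μ]
        μ[(fun ω => θ0 (X ω) * h0 (Z ω, X ω)) + fun ω => f0 (X ω)|mXa X] := by
      refine condExp_congr_ae (hEY.trans ?_)
      filter_upwards with ω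
      simp [Pi.add_apply]
    have h3 : μ[(fun ω => θ0 (X ω) * h0 (Z ω, X ω)) + fun ω => f0 (X ω)|mXa X] =ᵐ[μ]
        μ[fun ω => θ0 (X ω) * h0 (Z ω, X ω)|mXa X] + μ[fun ω => f0 (X ω)|mXa X] :=
      condExp_add iθ0h0W if0X _
    have h4 : μ[fun ω => θ0 (X ω) * h0 (Z ω, X ω)|mXa X] =ᵐ[μ]
        (fun ω => θ0 (X ω)) * μ[fun ω => h0 (Z ω, X ω)|mXa X] :=
      condExp_mul_of_stronglyMeasurable_left smθ0X iθ0h0W ih0W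
    have h5 : μ[fun ω => f0 (X ω)|mXa X] = fun ω => f0 (X ω) :=
      condExp_of_stronglyMeasurable hmX_le ((hf0m.comp hXmX).stronglyMeasurable) if0X
    filter_upwards [hq0, h1, h2, h3, h4, hEh0] with ω e0 e1 e2 e3 e4 e5
    simp only [Pi.add_apply, Pi.mul_apply] at *
    rw [e0, e1, e2, e3, e4, e5, h5]
  -- Step D : E[Y - q0 | Z,X] = θ0 * (h0 - p0)
  have hEres : μ[fun ω => Y ω - q0 (X ω)|mZXa Z X] =ᵐ[μ]
      fun ω => θ0 (X ω) * (h0 (Z ω, X ω) - p0 (X ω)) := by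
    have h1 : μ[fun ω => Y ω - q0 (X ω)|mZXa Z X] =ᵐ[μ]
        μ[Y|mZXa Z X] - μ[fun ω => q0 (X ω)|mZXa Z X] := condExp_sub iY iq0X _
    have h2 : μ[fun ω => q0 (X ω)|mZXa Z X] = fun ω => q0 (X ω) :=
      condExp_of_stronglyMeasurable hmZX_le smq0X iq0X
    have h2' : ∀ ω, (μ[fun ω => q0 (X ω)|mZXa Z X]) ω = q0 (X ω) := fun ω => congrFun h2 ω
    filter_upwards [h1, hEY, hq0id] with ω e1 e2 e3
    simp only [Pi.sub_apply] at *
    rw [e1, e2, h2', e3]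
    ring
  -- Step E : E[(Y - q0)·D | Z,X] = θ0 · D²
  have hE1 : μ[fun ω => (Y ω - q0 (X ω)) * (h0 (Z ω, X ω) - p0 (X ω))|mZXa Z X] =ᵐ[μ]
      fun ω => θ0 (X ω) * (h0 (Z ω, X ω) - p0 (X ω)) ^ 2 := by
    have hc : (fun ω => (Y ω - q0 (X ω)) * (h0 (Z ω, X ω) - p0 (X ω))) =
        (fun ω => h0 (Z ω, X ω) - p0 (X ω)) * (fun ω => Y ω - q0 (X ω)) := by
      funext ω; simp only [Pi.mul_apply]; ring
    have h1 : μ[(fun ω => h0 (Z ω, X ω) - p0 (X ω)) * (fun ω => Y ω - q0 (X ω))|mZXa Z X] =ᵐ[μ]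
        (fun ω => h0 (Z ω, X ω) - p0 (X ω)) * μ[fun ω => Y ω - q0 (X ω)|mZXa Z X] :=
      condExp_mul_of_stronglyMeasurable_left smD (by rw [← hc]; exact iYq0D) (iY.sub iq0X)
    rw [hc]
    filter_upwards [h1, hEres] with ω e1 e2
    simp only [Pi.mul_apply] at *
    rw [e1, e2]
    ring
  -- Step F : E[(Y - q0)·D | X] = θ0 · V0
  have hF : μ[fun ω => (Y ω - q0 (X ω)) * (h0 (Z ω, X ω) - p0 (X ω))|mXa X] =ᵐ[μ]
      fun ω => θ0 (X ω) * V0 (X ω) := by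
    have h1 : μ[fun ω => (Y ω - q0 (X ω)) * (h0 (Z ω, X ω) - p0 (X ω))|mXa X] =ᵐ[μ]
        μ[μ[fun ω => (Y ω - q0 (X ω)) * (h0 (Z ω, X ω) - p0 (X ω))|mZXa Z X]|mXa X] :=
      (condExp_condExp_of_le hmX_le_mZX hmZX_le).symm
    have h2 : μ[μ[fun ω => (Y ω - q0 (X ω)) * (h0 (Z ω, X ω) - p0 (X ω))|mZXa Z X]|mXa X] =ᵐ[μ]
        μ[fun ω => θ0 (X ω) * (h0 (Z ω, X ω) - p0 (X ω)) ^ 2|mXa X] := condExp_congr_ae hE1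
    have h3 : μ[fun ω => θ0 (X ω) * (h0 (Z ω, X ω) - p0 (X ω)) ^ 2|mXa X] =ᵐ[μ]
        (fun ω => θ0 (X ω)) * μ[fun ω => (h0 (Z ω, X ω) - p0 (X ω)) ^ 2|mXa X] :=
      condExp_mul_of_stronglyMeasurable_left smθ0X iθ0D2 iD2
    filter_upwards [h1, h2, h3, hV0] with ω e1 e2 e3 e4
    simp only [Pi.mul_apply] at *
    rw [e1, e2, e3, ← e4]
  -- Step G : E[θ·D² | X] = θ · V0
  have hG : μ[fun ω => θ (X ω) * (h0 (Z ω, X ω) - p0 (X ω)) ^ 2|mXa X] =ᵐ[μ]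
      fun ω => θ (X ω) * V0 (X ω) := by
    have h3 : μ[fun ω => θ (X ω) * (h0 (Z ω, X ω) - p0 (X ω)) ^ 2|mXa X] =ᵐ[μ]
        (fun ω => θ (X ω)) * μ[fun ω => (h0 (Z ω, X ω) - p0 (X ω)) ^ 2|mXa X] :=
      condExp_mul_of_stronglyMeasurable_left smθX iθD2 iD2
    filter_upwards [h3, hV0] with ω e3 e4
    simp only [Pi.mul_apply] at *
    rw [e3, ← e4]
  -- Step H : conclude
  have hsplit : (fun ω => (Y ω - q0 (X ω) - θ (X ω) * (h0 (Z ω, X ω) - p0 (X ω)))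
      * (h0 (Z ω, X ω) - p0 (X ω))) =
      (fun ω => (Y ω - q0 (X ω)) * (h0 (Z ω, X ω) - p0 (X ω))) -
        fun ω => θ (X ω) * (h0 (Z ω, X ω) - p0 (X ω)) ^ 2 := by
    funext ω; simp only [Pi.sub_apply]; ring
  have hmom' : μ[(fun ω => (Y ω - q0 (X ω)) * (h0 (Z ω, X ω) - p0 (X ω))) -
      (fun ω => θ (X ω) * (h0 (Z ω, X ω) - p0 (X ω)) ^ 2)|mXa X] =ᵐ[μ] 0 := by
    rw [← hsplit]; exact hmom
  have hsub : μ[(fun ω => (Y ω - q0 (X ω)) * (h0 (Z ω, X ω) - p0 (X ω))) -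
      (fun ω => θ (X ω) * (h0 (Z ω, X ω) - p0 (X ω)) ^ 2)|mXa X] =ᵐ[μ]
      μ[fun ω => (Y ω - q0 (X ω)) * (h0 (Z ω, X ω) - p0 (X ω))|mXa X] -
        μ[fun ω => θ (X ω) * (h0 (Z ω, X ω) - p0 (X ω)) ^ 2|mXa X] :=
    condExp_sub iYq0D iθD2 _
  filter_upwards [hmom', hsub, hF, hG, hoverlap] with ω e0 e1 e2 e3 e4
  simp only [Pi.sub_apply, Pi.zero_apply] at *
  rw [e1, e2, e3] at e0
  have hV0pos : 0 < V0 (X ω) := lt_of_lt_of_le hlam0 e4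
  have h5 : (θ0 (X ω) - θ (X ω)) * V0 (X ω) = 0 := by rw [sub_mul]; linarith
  rcases mul_eq_zero.mp h5 with h | h
  · linarith [sub_eq_zero.mp h]
  · linarith
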